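/- Let T : S_n(ℝ) → S_n(ℝ) be a linear transformation such that T(A) is positive definite whenever A is positive definite, and let 𝒜 denote the set of positive definite matrices in S_n(ℝ). Then the following are equivalent: (i) for every A ∈ S_n(ℝ), if T(A) is positive definite then A is positive definite; (ii) T(𝒜) = 𝒜, i.e. the image under T of the set of positive definite symmetric matrices equals the set of positive definite symmetric matrices. -/

import Mathlib

open Matrix

private lemma symMat_quad_bound {n : ℕ} (S : Matrix (Fin n) (Fin n) ℝ) (x : Fin n → ℝ) :
    |x ⬝ᵥ S *ᵥ x| ≤ (∑ i, ∑ j, |S i j|) * (x ⬝ᵥ x) := by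
  have hsq : ∀ i, (x i)^2 ≤ x ⬝ᵥ x := by
    intro i
    have : ∀ k, 0 ≤ x k * x k := fun k => mul_self_nonneg _
    simpa [dotProduct, sq] using Finset.single_le_sum (fun k _ => this k) (Finset.mem_univ i)
  have hxx : ∀ i j, |x i| * |x j| ≤ x ⬝ᵥ x := by
    intro i j
    nlinarith [hsq i, hsq j, abs_nonneg (x i), abs_nonneg (x j), sq_abs (x i), sq_abs (x j)]
  calc |x ⬝ᵥ S *ᵥ x| = |∑ i, ∑ j, x i * S i j * x j| := by
        simp [dotProduct, mulVec, Finset.mul_sum, mul_assoc]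
    _ ≤ ∑ i, ∑ j, |x i * S i j * x j| := by
        refine (Finset.abs_sum_le_sum_abs _ _).trans ?_
        exact Finset.sum_le_sum fun i _ => Finset.abs_sum_le_sum_abs _ _
    _ ≤ ∑ i, ∑ j, |S i j| * (x ⬝ᵥ x) := by
        refine Finset.sum_le_sum fun i _ => Finset.sum_le_sum fun j _ => ?_
        rw [abs_mul, abs_mul]
        calc |x i| * |S i j| * |x j| = |S i j| * (|x i| * |x j|) := by ring
          _ ≤ |S i j| * (x ⬝ᵥ x) := mul_le_mul_of_nonneg_left (hxx i j) (abs_nonneg _)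
    _ = (∑ i, ∑ j, |S i j|) * (x ⬝ᵥ x) := by rw [Finset.sum_mul]; simp [Finset.sum_mul]

private lemma isHerm_of_isSymm {n : ℕ} {A : Matrix (Fin n) (Fin n) ℝ} (h : A.IsSymm) :
    A.IsHermitian := by
  exact Matrix.isHermitian_iff_isSymm.mpr h

/-- every symmetric matrix becomes positive definite after adding a large multiple of `1`. -/
private lemma exists_shift_posDef {n : ℕ} (S : Matrix (Fin n) (Fin n) ℝ) (hS : S.IsSymm) :
    ∃ c : ℝ, 0 < c ∧ (S + c • 1).PosDef := by
  refine ⟨(∑ i, ∑ j, |S i j|) + 1, by positivity, Matrix.PosDef.of_dotProduct_mulVec_pos ?_ ?_⟩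
  · exact isHerm_of_isSymm (hS.add (Matrix.isSymm_one.smul _))
  · intro x hx
    have hxpos : 0 < x ⬝ᵥ x := by
      have hne : x ⬝ᵥ x ≠ 0 := fun h => hx (dotProduct_self_eq_zero.mp h)
      have hnn : 0 ≤ x ⬝ᵥ x := by
        simp only [dotProduct]
        exact Finset.sum_nonneg fun k _ => mul_self_nonneg _
      exact lt_of_le_of_ne hnn (Ne.symm hne)
    have hb := symMat_quad_bound S x
    have : x ⬝ᵥ (S + ((∑ i, ∑ j, |S i j|) + 1) • 1) *ᵥ x
        = x ⬝ᵥ S *ᵥ x + ((∑ i, ∑ j, |S i j|) + 1) * (x ⬝ᵥ x) := by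
      simp [Matrix.add_mulVec, Matrix.smul_mulVec, dotProduct_add, dotProduct_smul,
        smul_eq_mul]
    rw [show star x = x from star_trivial x, this]
    nlinarith [abs_nonneg (x ⬝ᵥ S *ᵥ x), neg_abs_le (x ⬝ᵥ S *ᵥ x)]

/-- The space `Sₙ(ℝ)` of `n × n` real symmetric matrices, as a submodule of the space of
all `n × n` real matrices. -/
def SymMat (n : ℕ) : Submodule ℝ (Matrix (Fin n) (Fin n) ℝ) where
  carrier := {A | A.IsSymm}
  add_mem' := fun ha hb => ha.add hb
  zero_mem' := by simp [Matrix.IsSymm]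
  smul_mem' := fun c _ hA => hA.smul c

/-- Let `T : Sₙ(ℝ) → Sₙ(ℝ)` be linear and preserve positive definiteness,
and let `𝒜` be the set of positive definite matrices in `Sₙ(ℝ)`.  Then `T(A)` positive
definite implies `A` positive definite (for all `A`) if and only if `T(𝒜) = 𝒜`. -/
theorem stmt12 (n : ℕ) (T : SymMat n →ₗ[ℝ] SymMat n)
    (hT : ∀ A : SymMat n, (A : Matrix (Fin n) (Fin n) ℝ).PosDef →
      ((T A : Matrix (Fin n) (Fin n) ℝ)).PosDef) :
    (∀ A : SymMat n, ((T A : Matrix (Fin n) (Fin n) ℝ)).PosDef →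
        (A : Matrix (Fin n) (Fin n) ℝ).PosDef) ↔
    (T '' {A : SymMat n | (A : Matrix (Fin n) (Fin n) ℝ).PosDef} =
      {A : SymMat n | (A : Matrix (Fin n) (Fin n) ℝ).PosDef}) := by
  have hone : (1 : Matrix (Fin n) (Fin n) ℝ) ∈ SymMat n := Matrix.isSymm_one
  set one : SymMat n := ⟨1, hone⟩ with hone_def
  have hone_pd : ((one : SymMat n) : Matrix (Fin n) (Fin n) ℝ).PosDef := by
    simpa using Matrix.PosDef.one (n := Fin n) (R := ℝ)
  constructor
  · -- (i) ⇒ (ii)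
    intro h
    -- T is injective
    have hinj : Function.Injective T := by
      rw [← LinearMap.ker_eq_bot, Submodule.eq_bot_iff]
      intro C hC
      rw [LinearMap.mem_ker] at hC
      -- for every t, 1 + t • C is pos def
      have hpd : ∀ t : ℝ, ((1 : Matrix (Fin n) (Fin n) ℝ) + t • (C : Matrix (Fin n) (Fin n) ℝ)).PosDef := by
        intro t
        have : (T (one + t • C) : Matrix (Fin n) (Fin n) ℝ).PosDef := by
          rw [map_add, LinearMap.map_smul, hC, smul_zero, add_zero]
          exact hT one hone_pd
        simpa using h _ this
      -- hence the quadratic form of C vanishes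
      have hq : ∀ x : Fin n → ℝ, x ⬝ᵥ (C : Matrix (Fin n) (Fin n) ℝ) *ᵥ x = 0 := by
        intro x
        by_cases hx : x = 0
        · simp [hx]
        by_contra hq0
        set q := x ⬝ᵥ (C : Matrix (Fin n) (Fin n) ℝ) *ᵥ x with hqdef
        have hlt := (hpd (-(x ⬝ᵥ x + 1) / q)).dotProduct_mulVec_pos hx
        have : x ⬝ᵥ ((1 : Matrix (Fin n) (Fin n) ℝ) + (-(x ⬝ᵥ x + 1) / q) • (C : Matrix (Fin n) (Fin n) ℝ)) *ᵥ x
            = x ⬝ᵥ x + (-(x ⬝ᵥ x + 1) / q) * q := by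
          simp [Matrix.add_mulVec, Matrix.smul_mulVec, dotProduct_add, dotProduct_smul,
            smul_eq_mul, hqdef]
        rw [show star x = x from star_trivial x, this] at hlt
        rw [div_mul_cancel₀ _ hq0] at hlt
        linarith
      -- C is positive semidefinite with zero quadratic form, hence zero
      have hpsd : ((C : Matrix (Fin n) (Fin n) ℝ)).PosSemidef := by
        refine Matrix.PosSemidef.of_dotProduct_mulVec_nonneg (isHerm_of_isSymm C.2) fun x => ?_
        rw [show star x = x from star_trivial x, hq x]
      have hmv : ∀ x : Fin n → ℝ, (C : Matrix (Fin n) (Fin n) ℝ) *ᵥ x = 0 := by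
        intro x
        exact (hpsd.dotProduct_mulVec_zero_iff x).mp
          (by rw [show star x = x from star_trivial x]; exact hq x)
      have : (C : Matrix (Fin n) (Fin n) ℝ) = 0 := by
        ext i j
        have := congrFun (hmv (Pi.single j 1)) i
        simpa using this
      exact Subtype.ext this
    have hsurj : Function.Surjective T := LinearMap.injective_iff_surjective.mp hinj
    ext B
    constructor
    · rintro ⟨A, hA, rfl⟩
      exact hT A hA
    · intro hB
      obtain ⟨A, rfl⟩ := hsurj B
      exact ⟨A, h A hB, rfl⟩
  · -- (ii) ⇒ (i)
    intro himg A hTA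
    -- pos def matrices span SymMat n
    have hspan : Submodule.span ℝ {A : SymMat n | (A : Matrix (Fin n) (Fin n) ℝ).PosDef} = ⊤ := by
      rw [eq_top_iff]
      intro S _
      obtain ⟨c, hc, hpd⟩ := exists_shift_posDef (S : Matrix (Fin n) (Fin n) ℝ) S.2
      have h1 : ((S + c • one : SymMat n) : Matrix (Fin n) (Fin n) ℝ).PosDef := by
        simpa using hpd
      have h2 : ((c • one : SymMat n) : Matrix (Fin n) (Fin n) ℝ).PosDef := by
        refine Matrix.PosDef.of_dotProduct_mulVec_pos (isHerm_of_isSymm (c • one).2) fun x hx => ?_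
        have := hone_pd.dotProduct_mulVec_pos hx
        have hcoe : ((c • one : SymMat n) : Matrix (Fin n) (Fin n) ℝ)
            = c • ((one : SymMat n) : Matrix (Fin n) (Fin n) ℝ) := rfl
        rw [hcoe, Matrix.smul_mulVec, dotProduct_smul, smul_eq_mul]
        positivity
      rw [show S = (S + c • one) - (c • one) from (add_sub_cancel_right S (c • one)).symm]
      exact sub_mem (Submodule.subset_span h1) (Submodule.subset_span h2)
    -- T is surjective
    have hrange : LinearMap.range T = ⊤ := by
      rw [eq_top_iff, ← hspan, Submodule.span_le]
      intro B hB
      have : B ∈ T '' {A : SymMat n | (A : Matrix (Fin n) (Fin n) ℝ).PosDef} := by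
        rw [himg]; exact hB
      obtain ⟨A, _, rfl⟩ := this
      exact LinearMap.mem_range_self T A
    have hinj : Function.Injective T :=
      LinearMap.injective_iff_surjective.mpr (LinearMap.range_eq_top.mp hrange)
    have : T A ∈ T '' {A : SymMat n | (A : Matrix (Fin n) (Fin n) ℝ).PosDef} := by
      rw [himg]; exact hTA
    obtain ⟨B, hB, hBA⟩ := this
    rwa [← hinj hBA]
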